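/- (Unambiguous state discrimination criterion.) Let H be a finite-dimensional complex inner product space, let φ_1,…,φ_n ∈ H be unit vectors with Gram matrix X (X_{ij} = ⟨φ_i, φ_j⟩), and let η_1,…,η_n ∈ [0,1]. The following are equivalent: (i) the matrix X − Γ is positive semidefinite, where Γ = diag(η_1,…,η_n); (ii) there exist a finite-dimensional complex inner product space K, an orthonormal family χ_1,…,χ_n ∈ K, and an isometric realization of the transformation φ_i ↦ χ_i with success probabilities η_i. -/

import Mathlib

open scoped ComplexOrder

variable {n : ℕ}

theorem WithLp.equiv_symm_add {p : ENNReal} {V : Type*} [AddCommGroup V] (x y : V) :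
    (WithLp.equiv p V).symm (x + y) = (WithLp.equiv p V).symm x + (WithLp.equiv p V).symm y := rfl

theorem WithLp.equiv_symm_smul {p : ENNReal} {K V : Type*} [AddCommGroup V] [SMul K V] (c : K) (x : V) :
    (WithLp.equiv p V).symm (c • x) = c • (WithLp.equiv p V).symm x := rfl

/-- linear combination map -/
def lc {V : Type*} [AddCommGroup V] [Module ℂ V] (v : Fin n → V) : (Fin n → ℂ) →ₗ[ℂ] V where
  toFun c := ∑ i, c i • v i
  map_add' c d := by simp [add_smul, Finset.sum_add_distrib]
  map_smul' a c := by simp [smul_smul, Finset.smul_sum]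

lemma lc_apply {V : Type*} [AddCommGroup V] [Module ℂ V] (v : Fin n → V) (c : Fin n → ℂ) :
    lc v c = ∑ i, c i • v i := rfl

lemma lc_single {V : Type*} [AddCommGroup V] [Module ℂ V] (v : Fin n → V) (i : Fin n) :
    lc v (Pi.single i 1) = v i := by
  simp [lc_apply, Pi.single_apply, ite_smul]

lemma lc_inner {V : Type*} [NormedAddCommGroup V] [InnerProductSpace ℂ V]
    {V' : Type*} [NormedAddCommGroup V'] [InnerProductSpace ℂ V']
    (v : Fin n → V) (w : Fin n → V')
    (hvw : ∀ i j, (inner ℂ (v i) (v j) : ℂ) = inner ℂ (w i) (w j))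
    (c d : Fin n → ℂ) : (inner ℂ (lc v c) (lc v d) : ℂ) = inner ℂ (lc w c) (lc w d) := by
  simp only [lc_apply, inner_sum, sum_inner, inner_smul_left, inner_smul_right, hvw]


lemma gram_posSemidef {V : Type*} [NormedAddCommGroup V] [InnerProductSpace ℂ V]
    (β : Fin n → V) :
    (Matrix.of fun i j => (inner ℂ (β i) (β j) : ℂ)).PosSemidef := by
  rw [Matrix.posSemidef_iff_dotProduct_mulVec]
  constructor
  · ext i j
    simp [Matrix.conjTranspose_apply, inner_conj_symm]
  · intro x
    have h1 : dotProduct (star x) ((Matrix.of fun i j => (inner ℂ (β i) (β j) : ℂ)).mulVec x)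
        = (inner ℂ (∑ i, x i • β i) (∑ j, x j • β j) : ℂ) := by
      simp only [dotProduct, Matrix.mulVec, Matrix.of_apply, inner_sum, sum_inner,
        inner_smul_left, inner_smul_right, Pi.star_apply, RCLike.star_def, Finset.mul_sum]
      rw [Finset.sum_comm]
      congr 1; ext i; congr 1; ext j; ring
    rw [h1, inner_self_eq_norm_sq_to_K]
    norm_cast
    exact RCLike.ofReal_nonneg.mpr (by positivity)

set_option maxHeartbeats 2000000 in
/-- unambiguous state discrimination criterion. -/
theorem unambiguous_discrimination_iff {n : ℕ} {H : Type*}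
    [NormedAddCommGroup H] [InnerProductSpace ℂ H] [FiniteDimensional ℂ H]
    (φ : Fin n → H) (η : Fin n → ℝ)
    (hφ : ∀ i, ‖φ i‖ = 1) (hη : ∀ i, η i ∈ Set.Icc (0 : ℝ) 1) :
    ((Matrix.of fun i j => (inner ℂ (φ i) (φ j) : ℂ))
        - Matrix.diagonal fun i => (η i : ℂ)).PosSemidef
      ↔
    (∃ (K : Type) (_ : NormedAddCommGroup K) (_ : InnerProductSpace ℂ K)
        (_ : FiniteDimensional ℂ K) (χ : Fin n → K),
        Orthonormal ℂ χ ∧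
        ∃ (W : Type) (_ : NormedAddCommGroup W) (_ : InnerProductSpace ℂ W)
          (_ : FiniteDimensional ℂ W) (U : H →ₗᵢ[ℂ] W) (J : K →ₗᵢ[ℂ] W)
          (β : Fin n → W),
            (∀ i, ∀ x : K, (inner ℂ (J x) (β i) : ℂ) = 0) ∧
            (∀ i, U (φ i) = (Real.sqrt (η i) : ℂ) • J (χ i) + β i)) := by
  constructor
  · intro hPSD
    classical
    obtain ⟨B, hB⟩ : ∃ B : Matrix (Fin n) (Fin n) ℂ, ((Matrix.of fun i j => (inner ℂ (φ i) (φ j) : ℂ))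
        - Matrix.diagonal fun i => (η i : ℂ)) = B.conjTranspose * B := by
      open MatrixOrder in
      obtain ⟨X, hX, -, hXX⟩ := CFC.exists_sqrt_of_isSelfAdjoint_of_quasispectrumRestricts
        hPSD.isHermitian (QuasispectrumRestricts.nnreal_of_nonneg hPSD.nonneg)
      exact ⟨X, by rw [← hXX, ← Matrix.star_eq_conjTranspose, hX.star_eq]⟩
    -- the target vectors
    set ψ : Fin n → EuclideanSpace ℂ (Fin n ⊕ Fin n) := fun i =>
      WithLp.toLp 2 (Sum.elim (fun l => if l = i then ((Real.sqrt (η i) : ℝ) : ℂ) else 0) (fun l => B l i) : Fin n ⊕ Fin n → ℂ) with hψ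
    set bv : Fin n → EuclideanSpace ℂ (Fin n ⊕ Fin n) := fun i =>
      WithLp.toLp 2 (Sum.elim 0 (fun l => B l i) : Fin n ⊕ Fin n → ℂ) with hbv
    have hBij : ∀ i j, (∑ l, (starRingEnd ℂ) (B l i) * B l j)
        = (inner ℂ (φ i) (φ j) : ℂ) - (if i = j then (η i : ℂ) else 0) := by
      intro i j
      have h := congrFun (congrFun hB i) j
      simp only [Matrix.sub_apply, Matrix.of_apply, Matrix.diagonal_apply, Matrix.mul_apply,
        Matrix.conjTranspose_apply, RCLike.star_def] at h
      rw [← h]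
    have hGram : ∀ i j, (inner ℂ (ψ i) (ψ j) : ℂ) = inner ℂ (φ i) (φ j) := by
      intro i j
      simp only [hψ, PiLp.inner_apply, PiLp.toLp_apply, RCLike.inner_apply', Fintype.sum_sum_type, Sum.elim_inl,
        Sum.elim_inr]
      rw [hBij i j]
      have : (∑ l, (starRingEnd ℂ) (if l = i then ((Real.sqrt (η i) : ℝ) : ℂ) else 0)
          * (if l = j then ((Real.sqrt (η j) : ℝ) : ℂ) else 0)) = if i = j then (η i : ℂ) else 0 := by
        rw [Finset.sum_eq_single i]
        · by_cases hij : i = j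
          · subst hij
            simp [Complex.conj_ofReal, ← Complex.ofReal_mul, Real.mul_self_sqrt (hη i).1]
          · simp [hij, Ne.symm hij]
        · intro l _ hl; simp [hl]
        · simp
      rw [this]
      ring
    have key := lc_inner ψ φ hGram
    have hker : LinearMap.ker (lc φ) ≤ LinearMap.ker (lc ψ) := by
      intro c hc
      rw [LinearMap.mem_ker] at hc ⊢
      have h0 := key c c
      rw [hc, inner_zero_left] at h0
      rwa [inner_self_eq_zero] at h0
    set S := LinearMap.range (lc φ) with hS
    have hmemS : ∀ i, φ i ∈ S := fun i => ⟨Pi.single i 1, lc_single φ i⟩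
    set h : S →ₗ[ℂ] EuclideanSpace ℂ (Fin n ⊕ Fin n) :=
      ((LinearMap.ker (lc φ)).liftQ (lc ψ) hker).comp ((lc φ).quotKerEquivRange.symm.toLinearMap)
      with hhdef
    have hh : ∀ (c : Fin n → ℂ) (hx : lc φ c ∈ S), h ⟨lc φ c, hx⟩ = lc ψ c := by
      intro c hx
      show ((LinearMap.ker (lc φ)).liftQ (lc ψ) hker) ((lc φ).quotKerEquivRange.symm ⟨lc φ c, hx⟩) = _
      rw [LinearMap.quotKerEquivRange_symm_apply_image, Submodule.mkQ_apply, Submodule.liftQ_apply]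
    have hhφ : ∀ i, h ⟨φ i, hmemS i⟩ = ψ i := by
      intro i
      have e : (⟨φ i, hmemS i⟩ : S) = ⟨lc φ (Pi.single i 1), LinearMap.mem_range_self (lc φ) (Pi.single i 1)⟩ :=
        Subtype.ext (lc_single φ i).symm
      rw [e, hh, lc_single]
    have hinnS : ∀ s t : S, (inner ℂ (h s) (h t) : ℂ) = inner ℂ (s : H) (t : H) := by
      rintro ⟨-, c, rfl⟩ ⟨-, d, rfl⟩
      exact (congrArg₂ (inner ℂ) (hh c _) (hh d _)).trans (key c d)
    set P := S.orthogonalProjectionOnto with hP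
    set R : H ≃ₗᵢ[ℂ] EuclideanSpace ℂ (Fin (Module.finrank ℂ H)) :=
      (stdOrthonormalBasis ℂ H).repr with hR
    set f : H →ₗ[ℂ] WithLp 2 ((EuclideanSpace ℂ (Fin n ⊕ Fin n)) × (EuclideanSpace ℂ (Fin (Module.finrank ℂ H)))) :=
      { toFun := fun x => (WithLp.equiv 2 _).symm (h (P x), R (x - (P x : H)))
        map_add' := fun x y => by
          simp only [map_add, Submodule.coe_add]
          rw [← WithLp.equiv_symm_add]
          congr 1
          rw [Prod.mk_add_mk, Prod.mk.injEq]
          refine ⟨rfl, ?_⟩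
          rw [← map_add]
          congr 1
          abel
        map_smul' := fun c x => by
          simp only [map_smul, Submodule.coe_smul, RingHom.id_apply]
          rw [← WithLp.equiv_symm_smul]
          congr 1
          rw [Prod.smul_mk, Prod.mk.injEq]
          refine ⟨rfl, ?_⟩
          rw [← map_smul]
          congr 1
          rw [smul_sub] } with hfdef
    have hproj : ∀ x y : H, (inner ℂ ((P x : H)) ((P y) : H) : ℂ)
        + inner ℂ (x - (P x : H)) (y - (P y : H)) = inner ℂ x y := by
      intro x y
      have h1 : (inner ℂ (x - (P x : H)) ((P y : H)) : ℂ) = 0 :=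
        S.starProjection_inner_eq_zero x (P y) (P y).2
      have h2 : (inner ℂ ((P x : H)) (y - (P y : H)) : ℂ) = 0 := by
        rw [← inner_conj_symm, (show inner ℂ (y - (P y : H)) (P x : H) = 0 from S.starProjection_inner_eq_zero y (P x) (P x).2), map_zero]
      have ex : x = (P x : H) + (x - (P x : H)) := by abel
      have ey : y = (P y : H) + (y - (P y : H)) := by abel
      conv_rhs => rw [ex, ey]
      rw [inner_add_left, inner_add_right, inner_add_right, h1, h2]
      ring
    have hf : ∀ x y : H, (inner ℂ (f x) (f y) : ℂ) = inner ℂ x y := by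
      intro x y
      have e0 : (inner ℂ (f x) (f y) : ℂ)
          = (inner ℂ (h (P x)) (h (P y)) : ℂ) + inner ℂ (R (x - (P x : H))) (R (y - (P y : H))) :=
        WithLp.prod_inner_apply _ _
      rw [e0, hinnS, R.inner_map_map, hproj]
    set U : H →ₗᵢ[ℂ] WithLp 2 ((EuclideanSpace ℂ (Fin n ⊕ Fin n)) × (EuclideanSpace ℂ (Fin (Module.finrank ℂ H)))) :=
      f.isometryOfInner hf with hU
    set emb : EuclideanSpace ℂ (Fin n) →ₗ[ℂ] EuclideanSpace ℂ (Fin n ⊕ Fin n) :=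
      { toFun := fun x => WithLp.toLp 2 (Sum.elim (WithLp.ofLp x) 0 : Fin n ⊕ Fin n → ℂ)
        map_add' := fun x y => by
          ext k; cases k <;> simp [PiLp.add_apply]
        map_smul' := fun c x => by
          ext k; cases k <;> simp [PiLp.smul_apply] } with hemb
    set J0 : EuclideanSpace ℂ (Fin n) →ₗ[ℂ] WithLp 2 ((EuclideanSpace ℂ (Fin n ⊕ Fin n)) × (EuclideanSpace ℂ (Fin (Module.finrank ℂ H)))) :=
      { toFun := fun x => (WithLp.equiv 2 _).symm (emb x, 0)
        map_add' := fun x y => by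
          rw [← WithLp.equiv_symm_add]
          congr 1
          rw [Prod.mk_add_mk, Prod.mk.injEq]
          exact ⟨by rw [map_add], by rw [add_zero]⟩
        map_smul' := fun c x => by
          rw [RingHom.id_apply, ← WithLp.equiv_symm_smul]
          congr 1
          rw [Prod.smul_mk, Prod.mk.injEq]
          exact ⟨by rw [map_smul], by rw [smul_zero]⟩ } with hJ0
    have hJ0inner : ∀ x y : EuclideanSpace ℂ (Fin n),
        (inner ℂ (J0 x) (J0 y) : ℂ) = inner ℂ x y := by
      intro x y
      have e1 : (inner ℂ (J0 x) (J0 y) : ℂ)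
          = (inner ℂ (emb x) (emb y) : ℂ) + (inner ℂ (0 : EuclideanSpace ℂ (Fin (Module.finrank ℂ H))) (0 : EuclideanSpace ℂ (Fin (Module.finrank ℂ H))) : ℂ) :=
        WithLp.prod_inner_apply _ _
      rw [e1, inner_zero_left, add_zero]
      simp only [PiLp.inner_apply, RCLike.inner_apply, hemb, LinearMap.coe_mk, AddHom.coe_mk,
        Fintype.sum_sum_type, Sum.elim_inl, Sum.elim_inr]
      simp
    set J : EuclideanSpace ℂ (Fin n) →ₗᵢ[ℂ] WithLp 2 ((EuclideanSpace ℂ (Fin n ⊕ Fin n)) × (EuclideanSpace ℂ (Fin (Module.finrank ℂ H)))) :=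
      J0.isometryOfInner hJ0inner with hJ
    set β : Fin n → WithLp 2 ((EuclideanSpace ℂ (Fin n ⊕ Fin n)) × (EuclideanSpace ℂ (Fin (Module.finrank ℂ H)))) := fun i =>
      (WithLp.equiv 2 _).symm (bv i, 0) with hβ
    refine ⟨EuclideanSpace ℂ (Fin n), inferInstance, inferInstance, inferInstance,
      fun i => EuclideanSpace.single i 1, EuclideanSpace.orthonormal_single,
      WithLp 2 ((EuclideanSpace ℂ (Fin n ⊕ Fin n)) × (EuclideanSpace ℂ (Fin (Module.finrank ℂ H)))), inferInstance, inferInstance,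
      inferInstance, U, J, β, ?_, ?_⟩
    · intro i x
      have e1 : (inner ℂ (J x) (β i) : ℂ)
          = (inner ℂ (emb x) (bv i) : ℂ) + (inner ℂ (0 : EuclideanSpace ℂ (Fin (Module.finrank ℂ H))) (0 : EuclideanSpace ℂ (Fin (Module.finrank ℂ H))) : ℂ) :=
        WithLp.prod_inner_apply _ _
      rw [e1, inner_zero_left, add_zero]
      simp only [PiLp.inner_apply, RCLike.inner_apply, hemb, LinearMap.coe_mk, AddHom.coe_mk,
        Fintype.sum_sum_type, Sum.elim_inl, Sum.elim_inr]
      simp [hbv]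
    · intro i
      have e2 : U (φ i) = (WithLp.equiv 2 _).symm (ψ i, 0) := by
        show f (φ i) = _
        have ePφ : P (φ i) = ⟨φ i, hmemS i⟩ :=
          Submodule.orthogonalProjectionOnto_mem_subspace_eq_self (⟨φ i, hmemS i⟩ : S)
        show (WithLp.equiv 2 _).symm (h (P (φ i)), R (φ i - (P (φ i) : H))) = _
        rw [ePφ, hhφ]
        congr 1
        rw [Prod.mk.injEq]
        exact ⟨rfl, by simp⟩
      rw [e2]
      have e3 : ((Real.sqrt (η i) : ℝ) : ℂ) • J (EuclideanSpace.single i 1) + β i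
          = (WithLp.equiv 2 ((EuclideanSpace ℂ (Fin n ⊕ Fin n)) × (EuclideanSpace ℂ (Fin (Module.finrank ℂ H))))).symm
              (((Real.sqrt (η i) : ℝ) : ℂ) • emb (EuclideanSpace.single i 1)
                + bv i,
                (0 : EuclideanSpace ℂ (Fin (Module.finrank ℂ H)))) := by
        show ((Real.sqrt (η i) : ℝ) : ℂ) • (WithLp.equiv 2 ((EuclideanSpace ℂ (Fin n ⊕ Fin n)) × (EuclideanSpace ℂ (Fin (Module.finrank ℂ H))))).symm (emb (EuclideanSpace.single i 1), 0)
            + (WithLp.equiv 2 ((EuclideanSpace ℂ (Fin n ⊕ Fin n)) × (EuclideanSpace ℂ (Fin (Module.finrank ℂ H))))).symm (bv i, 0) = _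
        rw [← WithLp.equiv_symm_smul, ← WithLp.equiv_symm_add]
        congr 1
        rw [Prod.smul_mk, Prod.mk_add_mk, Prod.mk.injEq]
        exact ⟨rfl, by rw [smul_zero, add_zero]⟩
      rw [e3]
      congr 1
      rw [Prod.mk.injEq]
      refine ⟨?_, rfl⟩
      ext k
      cases k with
      | inl l =>
          simp only [hψ, Sum.elim_inl, PiLp.add_apply, PiLp.smul_apply, hemb, LinearMap.coe_mk,
            AddHom.coe_mk, EuclideanSpace.single_apply, smul_eq_mul]
          have hb : bv i (Sum.inl l) = 0 := rfl
          rw [hb, add_zero]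
          by_cases hl : l = i <;> simp [hl]
      | inr l =>
          simp only [hψ, Sum.elim_inr, PiLp.add_apply, PiLp.smul_apply, hemb, LinearMap.coe_mk,
            AddHom.coe_mk, smul_eq_mul]
          have hb : bv i (Sum.inr l) = B l i := rfl
          rw [hb]
          simp
  · rintro ⟨K, _i1, _i2, _i3, χ, hχ, W, _j1, _j2, _j3, U, J, β, hβ, hU⟩
    have hβ' : ∀ i j, (inner ℂ (β i) (J (χ j)) : ℂ) = 0 := by
      intro i j
      rw [← inner_conj_symm, hβ i (χ j), map_zero]
    have key : ∀ i j, (inner ℂ (φ i) (φ j) : ℂ)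
        = (if i = j then (η i : ℂ) else 0) + inner ℂ (β i) (β j) := by
      intro i j
      rw [← U.inner_map_map (φ i) (φ j), hU i, hU j]
      rw [inner_add_left, inner_add_right, inner_add_right, inner_smul_left, inner_smul_left,
        inner_smul_right, inner_smul_right, J.inner_map_map, hβ j (χ i), hβ' i j,
        orthonormal_iff_ite.mp hχ i j]
      simp only [mul_zero, add_zero, zero_add, Complex.conj_ofReal, mul_ite, mul_one]
      congr 1
      split
      · next h => subst h; rw [← Complex.ofReal_mul, Real.mul_self_sqrt (hη i).1]
      · simp
    have : ((Matrix.of fun i j => (inner ℂ (φ i) (φ j) : ℂ))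
          - Matrix.diagonal fun i => (η i : ℂ))
        = Matrix.of fun i j => (inner ℂ (β i) (β j) : ℂ) := by
      ext i j
      simp only [Matrix.sub_apply, Matrix.of_apply, Matrix.diagonal_apply, key i j]
      split <;> simp
    rw [this]
    exact gram_posSemidef β
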